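/- For 0 ≤ l ≤ r < n, let t ∈ {l,...,r} satisfy R_{lr}(x_t) = R_{lr} (i.e., x_t is a minimax-regret sink for the subpath [x_l, x_r] as assumed dominant part). Then there exists an index i with t ≤ i ≤ r+1 such that R_{l(r+1)}(x_i) = R_{l(r+1)}; i.e., when the subpath is extended to the right by one vertex, some minimax-regret sink lies at or to the right of x_t. -/

import Mathlib

/-- Maximum of `f` over a finite set of indices, with the empty maximum being `0`. -/
noncomputable def maxOver (S : Finset ℕ) (f : ℕ → ℝ) : ℝ := S.fold max 0 f

/-- Left evacuation time to sink `x t` of the subpath starting at `x l`, under weights `w`. -/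
noncomputable def thetaL (x : ℕ → ℝ) (τ : ℝ) (w : ℕ → ℝ) (l t : ℕ) : ℝ :=
  maxOver (Finset.Ico l t) (fun i => (x t - x i) * τ + ∑ j ∈ Finset.Icc l i, w j)

/-- Right evacuation time to sink `x t` of the subpath ending at `x r`, under weights `w`. -/
noncomputable def thetaR (x : ℕ → ℝ) (τ : ℝ) (w : ℕ → ℝ) (t r : ℕ) : ℝ :=
  maxOver (Finset.Ioc t r) (fun i => (x i - x t) * τ + ∑ j ∈ Finset.Icc i r, w j)

/-- 1-sink evacuation time `Θ¹([x_l,x_r], x_t, w)`. -/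
noncomputable def theta1 (x : ℕ → ℝ) (τ : ℝ) (w : ℕ → ℝ) (l t r : ℕ) : ℝ :=
  max (thetaL x τ w l t) (thetaR x τ w t r)

/-- A scenario assigns each vertex a weight within its bounds. -/
def IsScenario (n : ℕ) (wlo whi : ℕ → ℝ) (s : ℕ → ℝ) : Prop :=
  ∀ i, i ≤ n → wlo i ≤ s i ∧ s i ≤ whi i

/-- A `k`-partition-with-sinks of the vertex set `{0,…,n}` into `k` consecutive
nonempty blocks `{l p, …, r p}` (`p ∈ {1,…,k}`) with a sink `t p` in each block. -/
structure KPartSinks (n k : ℕ) where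
  l : ℕ → ℕ
  r : ℕ → ℕ
  t : ℕ → ℕ
  first : l 1 = 0
  last : r k = n
  consec : ∀ p, 1 ≤ p → p < k → l (p + 1) = r p + 1
  block_nonempty : ∀ p, 1 ≤ p → p ≤ k → l p ≤ r p
  sink_lb : ∀ p, 1 ≤ p → p ≤ k → l p ≤ t p
  sink_ub : ∀ p, 1 ≤ p → p ≤ k → t p ≤ r p

/-- `k`-sink evacuation time `Θᵏ(P, {P̂,Ŷ}, w)`. -/
noncomputable def thetaK {n k : ℕ} (x : ℕ → ℝ) (τ : ℝ) (PY : KPartSinks n k) (w : ℕ → ℝ) : ℝ :=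
  maxOver (Finset.Icc 1 k) (fun p => theta1 x τ w (PY.l p) (PY.t p) (PY.r p))

/-- Optimal `k`-sink evacuation time `Θᵏ_opt(P, w)`. -/
noncomputable def thetaOpt (x : ℕ → ℝ) (τ : ℝ) (n k : ℕ) (w : ℕ → ℝ) : ℝ :=
  sInf {v : ℝ | ∃ PY : KPartSinks n k, thetaK x τ PY w = v}

/-- Regret `R({P̂,Ŷ}, w)`. -/
noncomputable def regret {n k : ℕ} (x : ℕ → ℝ) (τ : ℝ) (PY : KPartSinks n k) (w : ℕ → ℝ) : ℝ :=
  thetaK x τ PY w - thetaOpt x τ n k w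

/-- Max-regret `R_max({P̂,Ŷ})`. -/
noncomputable def maxRegret {n k : ℕ} (x : ℕ → ℝ) (τ : ℝ) (wlo whi : ℕ → ℝ)
    (PY : KPartSinks n k) : ℝ :=
  sSup {v : ℝ | ∃ s : ℕ → ℝ, IsScenario n wlo whi s ∧ regret x τ PY s = v}

/-- A worst-case scenario: a scenario attaining the max-regret. -/
def IsWorstCase {n k : ℕ} (x : ℕ → ℝ) (τ : ℝ) (wlo whi : ℕ → ℝ) (PY : KPartSinks n k)
    (s : ℕ → ℝ) : Prop :=
  IsScenario n wlo whi s ∧ regret x τ PY s = maxRegret x τ wlo whi PY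

/-- `d` is the index of the dominant part of `{P̂,Ŷ}` under weights `w`:
the smallest index attaining `max_p Θ¹(P_p, y_p, w)`. -/
def IsDominant {n k : ℕ} (x : ℕ → ℝ) (τ : ℝ) (PY : KPartSinks n k) (w : ℕ → ℝ) (d : ℕ) : Prop :=
  1 ≤ d ∧ d ≤ k ∧
  (∀ p, 1 ≤ p → p ≤ k →
    theta1 x τ w (PY.l p) (PY.t p) (PY.r p) ≤ theta1 x τ w (PY.l d) (PY.t d) (PY.r d)) ∧
  (∀ p, 1 ≤ p → p < d →
    theta1 x τ w (PY.l p) (PY.t p) (PY.r p) < theta1 x τ w (PY.l d) (PY.t d) (PY.r d))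

/-- `R_{lr}(x_t)`: the max-regret of the subpath `[x_l,x_r]` as assumed dominant
part with sink `x_t`. -/
noncomputable def Rsink (x : ℕ → ℝ) (τ : ℝ) (wlo whi : ℕ → ℝ) (n k : ℕ) (l r t : ℕ) : ℝ :=
  sSup {v : ℝ | ∃ s : ℕ → ℝ, IsScenario n wlo whi s ∧
    theta1 x τ s l t r - thetaOpt x τ n k s = v}

/-- `R_{lr}`: the minimax regret of the subpath `[x_l,x_r]` as assumed dominant part. -/
noncomputable def Rlr (x : ℕ → ℝ) (τ : ℝ) (wlo whi : ℕ → ℝ) (n k : ℕ) (l r : ℕ) : ℝ :=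
  sInf {v : ℝ | ∃ t, l ≤ t ∧ t ≤ r ∧ Rsink x τ wlo whi n k l r t = v}

/-- A partition of `{0,…,i}` into `q` consecutive nonempty blocks `{l p, …, r p}`. -/
def IsQPartition (q i : ℕ) (l r : ℕ → ℕ) : Prop :=
  l 1 = 0 ∧ r q = i ∧ (∀ p, 1 ≤ p → p < q → l (p + 1) = r p + 1) ∧
  (∀ p, 1 ≤ p → p ≤ q → l p ≤ r p)

/-- `M(q, i)`: the minimum over partitions of `{0,…,i}` into `q` consecutive
nonempty blocks of `max_p R_{l_p r_p}`. -/
noncomputable def Mreg (x : ℕ → ℝ) (τ : ℝ) (wlo whi : ℕ → ℝ) (n k : ℕ) (q i : ℕ) : ℝ :=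
  sInf {v : ℝ | ∃ lf rf : ℕ → ℕ, IsQPartition q i lf rf ∧
    maxOver (Finset.Icc 1 q) (fun p => Rlr x τ wlo whi n k (lf p) (rf p)) = v}

/-- Left-dominant scenario on `{l,…,r}`. -/
def LeftDominant (wlo whi s : ℕ → ℝ) (l r : ℕ) : Prop :=
  ∃ i, l ≤ i ∧ i ≤ r + 1 ∧ (∀ j, l ≤ j → j < i → s j = whi j) ∧
    (∀ j, i ≤ j → j ≤ r → s j = wlo j)

/-- Right-dominant scenario on `{l,…,r}`. -/
def RightDominant (wlo whi s : ℕ → ℝ) (l r : ℕ) : Prop :=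
  ∃ i, l ≤ i ∧ i ≤ r + 1 ∧ (∀ j, l ≤ j → j < i → s j = wlo j) ∧
    (∀ j, i ≤ j → j ≤ r → s j = whi j)

/- ———— Auxiliary lemmas ———— -/

lemma maxOver_nonneg (S : Finset ℕ) (f : ℕ → ℝ) : 0 ≤ maxOver S f := by
  rw [maxOver, Finset.le_fold_max]; exact Or.inl le_rfl

lemma le_maxOver {S : Finset ℕ} {f : ℕ → ℝ} {i : ℕ} (h : i ∈ S) : f i ≤ maxOver S f := by
  rw [maxOver, Finset.le_fold_max]; exact Or.inr ⟨i, h, le_rfl⟩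

lemma maxOver_le {S : Finset ℕ} {f : ℕ → ℝ} {B : ℝ} (hB : 0 ≤ B)
    (h : ∀ i ∈ S, f i ≤ B) : maxOver S f ≤ B := by
  rw [maxOver, Finset.fold_max_le]; exact ⟨hB, h⟩

lemma maxOver_mono {S T : Finset ℕ} {f g : ℕ → ℝ} (hST : S ⊆ T)
    (hfg : ∀ i ∈ S, f i ≤ g i) : maxOver S f ≤ maxOver T g :=
  maxOver_le (maxOver_nonneg T g) fun i hi => (hfg i hi).trans (le_maxOver (hST hi))

lemma theta1_mono_w {x : ℕ → ℝ} {τ : ℝ} {n : ℕ} {s w' : ℕ → ℝ}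
    (h : ∀ j, j ≤ n → s j ≤ w' j) {l t ρ : ℕ}
    (htn : t ≤ n) (hρn : ρ ≤ n) : theta1 x τ s l t ρ ≤ theta1 x τ w' l t ρ := by
  refine max_le_max (maxOver_mono (le_refl _) fun i hi => ?_)
    (maxOver_mono (le_refl _) fun i hi => ?_)
  · rw [Finset.mem_Ico] at hi
    exact add_le_add_right (Finset.sum_le_sum fun j hj => by
      rw [Finset.mem_Icc] at hj; exact h j (by omega)) _
  · rw [Finset.mem_Ioc] at hi
    exact add_le_add_right (Finset.sum_le_sum fun j hj => by
      rw [Finset.mem_Icc] at hj; exact h j (by omega)) _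

lemma theta1_extend {x : ℕ → ℝ} {τ : ℝ} {s : ℕ → ℝ} {l u r : ℕ} (hs : 0 ≤ s (r + 1)) :
    theta1 x τ s l u r ≤ theta1 x τ s l u (r + 1) := by
  refine max_le_max le_rfl (maxOver_mono (Finset.Ioc_subset_Ioc_right (by omega)) ?_)
  intro i hi
  rw [Finset.mem_Ioc] at hi
  rw [Finset.sum_Icc_succ_top (by omega : i ≤ r + 1)]
  linarith

lemma theta1_key {x : ℕ → ℝ} {τ : ℝ} {s : ℕ → ℝ} {l u t r : ℕ} (hut : u ≤ t) (hτ : 0 ≤ τ)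
    (hxut : x u ≤ x t) :
    theta1 x τ s l t (r + 1) ≤ max (theta1 x τ s l u (r + 1)) (theta1 x τ s l t r) := by
  refine max_le ((le_max_left _ _).trans (le_max_right _ _)) (le_max_of_le_left ?_)
  refine le_trans ?_ (le_max_right (thetaL x τ s l u) _)
  refine maxOver_mono (Finset.Ioc_subset_Ioc_left hut) fun i _ => ?_
  exact add_le_add_left (mul_le_mul_of_nonneg_right (by linarith) hτ) _

lemma x_mono_aux {x : ℕ → ℝ} {n : ℕ} (hx : ∀ i, i < n → x i < x (i + 1)) :
    ∀ {i j : ℕ}, i ≤ j → j ≤ n → x i ≤ x j := by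
  intro i j
  induction j with
  | zero =>
    intro hij _
    have : i = 0 := by omega
    exact this ▸ le_rfl
  | succ m ih =>
    intro hij hjn
    rcases Nat.lt_or_ge i (m + 1) with h | h
    · exact le_trans (ih (by omega) (by omega)) (le_of_lt (hx m (by omega)))
    · have : i = m + 1 := by omega
      rw [this]

lemma thetaOpt_nonneg {x : ℕ → ℝ} {τ : ℝ} {n k : ℕ} (s : ℕ → ℝ) :
    0 ≤ thetaOpt x τ n k s :=
  Real.sInf_nonneg fun v hv => by
    obtain ⟨PY, h⟩ := hv; exact h ▸ maxOver_nonneg _ _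

/-- The set of regret values defining `Rsink`. -/
def RsinkSet (x : ℕ → ℝ) (τ : ℝ) (wlo whi : ℕ → ℝ) (n k : ℕ) (l r t : ℕ) : Set ℝ :=
  {v : ℝ | ∃ s : ℕ → ℝ, IsScenario n wlo whi s ∧
    theta1 x τ s l t r - thetaOpt x τ n k s = v}

lemma RsinkSet_nonempty {x : ℕ → ℝ} {τ : ℝ} {wlo whi : ℕ → ℝ} {n k : ℕ}
    (hw : ∀ i, i ≤ n → 0 < wlo i ∧ wlo i ≤ whi i) (l r t : ℕ) :
    (RsinkSet x τ wlo whi n k l r t).Nonempty :=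
  ⟨_, wlo, fun i hi => ⟨le_rfl, (hw i hi).2⟩, rfl⟩

lemma RsinkSet_bddAbove {x : ℕ → ℝ} {τ : ℝ} {wlo whi : ℕ → ℝ} {n k : ℕ}
    {l r t : ℕ} (htn : t ≤ n) (hrn : r ≤ n) :
    BddAbove (RsinkSet x τ wlo whi n k l r t) := by
  refine ⟨theta1 x τ whi l t r, fun v hv => ?_⟩
  obtain ⟨s, hs, he⟩ := hv
  calc v = theta1 x τ s l t r - thetaOpt x τ n k s := he.symm
    _ ≤ theta1 x τ s l t r := sub_le_self _ (thetaOpt_nonneg s)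
    _ ≤ theta1 x τ whi l t r := theta1_mono_w (fun j hj => (hs j hj).2) htn hrn

lemma Rsink_eq_sSup (x : ℕ → ℝ) (τ : ℝ) (wlo whi : ℕ → ℝ) (n k l r t : ℕ) :
    Rsink x τ wlo whi n k l r t = sSup (RsinkSet x τ wlo whi n k l r t) := rfl

/-- when a subpath is extended to the right by one vertex, some
minimax-regret sink lies at or to the right of the previous minimax-regret sink. -/
theorem stmt_16 (n k : ℕ) (x : ℕ → ℝ) (τ : ℝ) (wlo whi : ℕ → ℝ)
    (hx : ∀ i, i < n → x i < x (i + 1)) (hτ : 0 < τ)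
    (hw : ∀ i, i ≤ n → 0 < wlo i ∧ wlo i ≤ whi i) (hk : 1 ≤ k)
    (l r t : ℕ) (hlr : l ≤ r) (hrn : r < n) (hlt : l ≤ t) (htr : t ≤ r)
    (hmin : Rsink x τ wlo whi n k l r t = Rlr x τ wlo whi n k l r) :
    ∃ i, t ≤ i ∧ i ≤ r + 1 ∧
      Rsink x τ wlo whi n k l (r + 1) i = Rlr x τ wlo whi n k l (r + 1) := by
  have himg : ∀ ρ : ℕ,
      {v : ℝ | ∃ t', l ≤ t' ∧ t' ≤ ρ ∧ Rsink x τ wlo whi n k l ρ t' = v}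
      = ↑((Finset.Icc l ρ).image (fun t' => Rsink x τ wlo whi n k l ρ t')) := by
    intro ρ; ext v
    simp only [Set.mem_setOf_eq, Finset.coe_image, Set.mem_image, Finset.mem_coe,
      Finset.mem_Icc]
    constructor
    · rintro ⟨t', h1, h2, h3⟩; exact ⟨t', ⟨h1, h2⟩, h3⟩
    · rintro ⟨t', ⟨h1, h2⟩, h3⟩; exact ⟨t', h1, h2, h3⟩
  have hfin : ∀ ρ : ℕ,
      {v : ℝ | ∃ t', l ≤ t' ∧ t' ≤ ρ ∧ Rsink x τ wlo whi n k l ρ t' = v}.Finite := by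
    intro ρ; rw [himg ρ]; exact Finset.finite_toSet _
  have hRlr : ∀ ρ : ℕ, Rlr x τ wlo whi n k l ρ
      = sInf {v : ℝ | ∃ t', l ≤ t' ∧ t' ≤ ρ ∧ Rsink x τ wlo whi n k l ρ t' = v} :=
    fun ρ => rfl
  have hne : {v : ℝ | ∃ t', l ≤ t' ∧ t' ≤ r + 1 ∧
      Rsink x τ wlo whi n k l (r + 1) t' = v}.Nonempty :=
    ⟨_, l, le_rfl, by omega, rfl⟩
  have hmem := Set.Nonempty.csInf_mem hne (hfin (r + 1))
  obtain ⟨i0, hi0l, hi0r, hgi0⟩ := hmem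
  rcases le_or_gt t i0 with hcase | hcase
  · exact ⟨i0, hcase, hi0r, by rw [hgi0, hRlr]⟩
  · -- i0 < t : show the sink t itself is also a minimizer for the extended path
    have hx_ut : x i0 ≤ x t := x_mono_aux hx hcase.le (by omega)
    have hs_nonneg : ∀ s : ℕ → ℝ, IsScenario n wlo whi s → (0 : ℝ) ≤ s (r + 1) :=
      fun s hs => le_trans (hw (r + 1) (by omega)).1.le (hs (r + 1) (by omega)).1
    have step2 : Rsink x τ wlo whi n k l r i0 ≤ Rsink x τ wlo whi n k l (r + 1) i0 := by
      rw [Rsink_eq_sSup, Rsink_eq_sSup]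
      refine csSup_le (RsinkSet_nonempty hw l r i0) ?_
      rintro v ⟨s, hs, rfl⟩
      exact le_trans (sub_le_sub_right (theta1_extend (hs_nonneg s hs)) _)
        (le_csSup (RsinkSet_bddAbove (by omega) (by omega)) ⟨s, hs, rfl⟩)
    have step1 : Rlr x τ wlo whi n k l r ≤ Rsink x τ wlo whi n k l r i0 := by
      rw [hRlr]
      exact csInf_le (hfin r).bddBelow ⟨i0, hi0l, by omega, rfl⟩
    have step3 : Rsink x τ wlo whi n k l (r + 1) t ≤
        max (Rsink x τ wlo whi n k l (r + 1) i0) (Rsink x τ wlo whi n k l r t) := by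
      rw [Rsink_eq_sSup]
      refine csSup_le (RsinkSet_nonempty hw l (r + 1) t) ?_
      rintro v ⟨s, hs, rfl⟩
      calc theta1 x τ s l t (r + 1) - thetaOpt x τ n k s
          ≤ max (theta1 x τ s l i0 (r + 1)) (theta1 x τ s l t r)
            - thetaOpt x τ n k s :=
            sub_le_sub_right (theta1_key hcase.le hτ.le hx_ut) _
        _ = max (theta1 x τ s l i0 (r + 1) - thetaOpt x τ n k s)
            (theta1 x τ s l t r - thetaOpt x τ n k s) := by rw [max_sub_sub_right]
        _ ≤ _ := max_le_max
            (le_csSup (RsinkSet_bddAbove (by omega) (by omega)) ⟨s, hs, rfl⟩)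
            (le_csSup (RsinkSet_bddAbove (by omega) (by omega)) ⟨s, hs, rfl⟩)
    have hchain : Rsink x τ wlo whi n k l (r + 1) t ≤
        Rsink x τ wlo whi n k l (r + 1) i0 := by
      refine step3.trans (max_le le_rfl ?_)
      rw [hmin]
      exact step1.trans step2
    refine ⟨t, le_rfl, by omega, ?_⟩
    have hle : Rlr x τ wlo whi n k l (r + 1) ≤ Rsink x τ wlo whi n k l (r + 1) t := by
      rw [hRlr]
      exact csInf_le (hfin (r + 1)).bddBelow ⟨t, hlt, by omega, rfl⟩
    have hge : Rsink x τ wlo whi n k l (r + 1) t ≤ Rlr x τ wlo whi n k l (r + 1) := by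
      rw [hRlr]
      exact hgi0 ▸ hchain
    exact le_antisymm hge hle
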